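/- Let f and g be monotonically increasing weight functions with C_g = ∑_{n=1}^∞ 1/g(n) < ∞, and let T be a matrix with entries in A such that ‖T‖_f < ∞ and ‖T‖_g < ∞. Define powers by T^1 := T and T^{n+1} := T^n · T using the entrywise matrix product. Then for every n ∈ ℕ, n ≥ 1, one has ‖T^n‖_f ≤ (C_g·‖T‖_g)^{n-1} · ‖T‖_f. -/

import Mathlib

/-- The weighted norm `‖T‖_f = sup_{i,j} f(max(i,j))·‖t_{ij}‖` (as a real supremum). -/
noncomputable def wnorm {A : Type*} [NonUnitalNormedRing A]
    (f : ℕ+ → ℝ) (T : ℕ+ → ℕ+ → A) : ℝ :=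
  sSup (Set.range fun p : ℕ+ × ℕ+ => f (max p.1 p.2) * ‖T p.1 p.2‖)

/-- Finiteness of the weighted norm `‖T‖_f`. -/
def WFinite {A : Type*} [NonUnitalNormedRing A]
    (f : ℕ+ → ℝ) (T : ℕ+ → ℕ+ → A) : Prop :=
  BddAbove (Set.range fun p : ℕ+ × ℕ+ => f (max p.1 p.2) * ‖T p.1 p.2‖)

/-- The entrywise matrix product `(RS)_{ij} = ∑_k r_{ik} s_{kj}`. -/
noncomputable def matMul {A : Type*} [NonUnitalNormedRing A]
    (R S : ℕ+ → ℕ+ → A) : ℕ+ → ℕ+ → A :=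
  fun i j => ∑' k : ℕ+, R i k * S k j

/-- Matrix powers: `matPow T n` is `T^(n+1)`, i.e. `matPow T 0 = T = T^1` and
`matPow T (n+1) = (matPow T n) · T = T^(n+2)`. -/
noncomputable def matPow {A : Type*} [NonUnitalNormedRing A]
    (T : ℕ+ → ℕ+ → A) : ℕ → (ℕ+ → ℕ+ → A)
  | 0 => T
  | n + 1 => matMul (matPow T n) T

/-- Helper: entrywise bound for a matrix product. -/
lemma step_bound {A : Type*} [NonUnitalNormedRing A] [CompleteSpace A]
    (f g : ℕ+ → ℝ) (hfmono : Monotone f) (hfpos : ∀ n, 0 < f n)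
    (hgmono : Monotone g) (hgpos : ∀ n, 0 < g n)
    (hCg : Summable fun n : ℕ+ => 1 / g n)
    (P T : ℕ+ → ℕ+ → A) (Bf Bg Nf Ng : ℝ)
    (hBf : 0 ≤ Bf) (hNg : 0 ≤ Ng)
    (hPf : ∀ i j, f (max i j) * ‖P i j‖ ≤ Bf)
    (hPg : ∀ i j, g (max i j) * ‖P i j‖ ≤ Bg)
    (hTf : ∀ i j, f (max i j) * ‖T i j‖ ≤ Nf)
    (hTg : ∀ i j, g (max i j) * ‖T i j‖ ≤ Ng)
    (hD : Bg * Nf ≤ Bf * Ng) :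
    ∀ i j, f (max i j) * ‖matMul P T i j‖ ≤ (∑' m : ℕ+, 1 / g m) * (Bf * Ng) := by
  intro i j
  have hterm : ∀ k : ℕ+, f (max i j) * ‖P i k * T k j‖ ≤ (Bf * Ng) * (1 / g k) := by
    intro k
    have hx : (0:ℝ) ≤ ‖P i k‖ := norm_nonneg _
    have hy : (0:ℝ) ≤ ‖T k j‖ := norm_nonneg _
    have hn : ‖P i k * T k j‖ ≤ ‖P i k‖ * ‖T k j‖ := norm_mul_le _ _
    have h1 : g k * (f (max i j) * ‖P i k * T k j‖) ≤ Bf * Ng := by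
      have hstep : g k * (f (max i j) * ‖P i k * T k j‖)
          ≤ g k * (f (max i j) * (‖P i k‖ * ‖T k j‖)) := by
        apply mul_le_mul_of_nonneg_left _ (hgpos k).le
        exact mul_le_mul_of_nonneg_left hn (hfpos _).le
      refine hstep.trans ?_
      rcases le_total (max i k) (max k j) with h | h
      · -- max i j ≤ max k j : pair g with P, f with T
        have hij : max i j ≤ max k j :=
          max_le ((le_max_left i k).trans h) (le_max_right k j)
        have hk : g k ≤ g (max i k) := hgmono (le_max_right i k)
        have hchain : g k * (f (max i j) * (‖P i k‖ * ‖T k j‖))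
            ≤ (g (max i k) * ‖P i k‖) * (f (max k j) * ‖T k j‖) := by
          have e : g k * (f (max i j) * (‖P i k‖ * ‖T k j‖))
              = (g k * ‖P i k‖) * (f (max i j) * ‖T k j‖) := by ring
          rw [e]
          exact mul_le_mul (mul_le_mul_of_nonneg_right hk hx)
            (mul_le_mul_of_nonneg_right (hfmono hij) hy)
            (mul_nonneg (hfpos _).le hy) (mul_nonneg (hgpos _).le hx)
        refine hchain.trans (le_trans ?_ hD)
        exact mul_le_mul (hPg i k) (hTf k j) (mul_nonneg (hfpos _).le hy)
          (le_trans (mul_nonneg (hgpos _).le hx) (hPg i k))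
      · -- max i j ≤ max i k : pair f with P, g with T
        have hij : max i j ≤ max i k :=
          max_le (le_max_left i k) ((le_max_right k j).trans h)
        have hk : g k ≤ g (max k j) := hgmono (le_max_left k j)
        have hchain : g k * (f (max i j) * (‖P i k‖ * ‖T k j‖))
            ≤ (f (max i k) * ‖P i k‖) * (g (max k j) * ‖T k j‖) := by
          have e : g k * (f (max i j) * (‖P i k‖ * ‖T k j‖))
              = (f (max i j) * ‖P i k‖) * (g k * ‖T k j‖) := by ring
          rw [e]
          exact mul_le_mul (mul_le_mul_of_nonneg_right (hfmono hij) hx)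
            (mul_le_mul_of_nonneg_right hk hy)
            (mul_nonneg (hgpos _).le hy) (mul_nonneg (hfpos _).le hx)
        refine hchain.trans ?_
        exact mul_le_mul (hPf i k) (hTg k j) (mul_nonneg (hgpos _).le hy)
          (le_trans (mul_nonneg (hfpos _).le hx) (hPf i k))
    rw [mul_one_div, le_div_iff₀ (hgpos k)]
    linarith [h1]
  have hsum1 : Summable (fun k : ℕ+ => f (max i j) * ‖P i k * T k j‖) := by
    refine Summable.of_nonneg_of_le (fun k => mul_nonneg (hfpos _).le (norm_nonneg _))
      hterm (hCg.mul_left (Bf * Ng))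
  have hsum2 : Summable (fun k : ℕ+ => ‖P i k * T k j‖) := by
    have h2 : ∀ k : ℕ+,
        (1 / f (max i j)) * (f (max i j) * ‖P i k * T k j‖) = ‖P i k * T k j‖ := by
      intro k
      rw [one_div, inv_mul_cancel_left₀ (hfpos _).ne']
    exact (summable_congr h2).mp (hsum1.mul_left _)
  have hmm : matMul P T i j = ∑' k : ℕ+, P i k * T k j := rfl
  calc f (max i j) * ‖matMul P T i j‖
      ≤ f (max i j) * ∑' k : ℕ+, ‖P i k * T k j‖ := by
        rw [hmm]
        exact mul_le_mul_of_nonneg_left (norm_tsum_le_tsum_norm hsum2) (hfpos _).le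
    _ = ∑' k : ℕ+, f (max i j) * ‖P i k * T k j‖ := tsum_mul_left.symm
    _ ≤ ∑' k : ℕ+, (Bf * Ng) * (1 / g k) := Summable.tsum_le_tsum hterm hsum1 (hCg.mul_left _)
    _ = (Bf * Ng) * ∑' k : ℕ+, 1 / g k := tsum_mul_left
    _ = (∑' m : ℕ+, 1 / g m) * (Bf * Ng) := mul_comm _ _

/-- If `f, g` are monotone weights with `C_g = ∑ 1/g(n) < ∞` and
`‖T‖_f, ‖T‖_g < ∞`, then `‖T^n‖_f ≤ (C_g‖T‖_g)^(n-1)·‖T‖_f` for all `n ≥ 1`;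
here `matPow T n = T^(n+1)`, so the exponent is `n`. -/
theorem matPow_wnorm_le
    {A : Type*} [NonUnitalNormedRing A] [CompleteSpace A]
    (f g : ℕ+ → ℝ) (hfmono : Monotone f) (hfpos : ∀ n, 0 < f n)
    (hgmono : Monotone g) (hgpos : ∀ n, 0 < g n)
    (hCg : Summable fun n : ℕ+ => 1 / g n)
    (T : ℕ+ → ℕ+ → A)
    (hTf : WFinite f T) (hTg : WFinite g T) :
    ∀ n : ℕ, wnorm f (matPow T n) ≤ ((∑' m : ℕ+, 1 / g m) * wnorm g T) ^ n * wnorm f T := by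
  set Cg : ℝ := ∑' m : ℕ+, 1 / g m with hCgdef
  set Ng : ℝ := wnorm g T with hNgdef
  set Nf : ℝ := wnorm f T with hNfdef
  have hTf' : ∀ i j, f (max i j) * ‖T i j‖ ≤ Nf := fun i j =>
    le_csSup hTf ⟨(i, j), rfl⟩
  have hTg' : ∀ i j, g (max i j) * ‖T i j‖ ≤ Ng := fun i j =>
    le_csSup hTg ⟨(i, j), rfl⟩
  have hNf0 : 0 ≤ Nf :=
    le_trans (mul_nonneg (hfpos _).le (norm_nonneg _)) (hTf' 1 1)
  have hNg0 : 0 ≤ Ng :=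
    le_trans (mul_nonneg (hgpos _).le (norm_nonneg _)) (hTg' 1 1)
  have hCg0 : 0 ≤ Cg := tsum_nonneg fun n => (div_pos one_pos (hgpos n)).le
  have hC0 : 0 ≤ Cg * Ng := mul_nonneg hCg0 hNg0
  have key : ∀ n : ℕ,
      (∀ i j, f (max i j) * ‖matPow T n i j‖ ≤ (Cg * Ng) ^ n * Nf) ∧
      (∀ i j, g (max i j) * ‖matPow T n i j‖ ≤ (Cg * Ng) ^ n * Ng) := by
    intro n
    induction n with
    | zero =>
      constructor
      · intro i j; simpa [matPow] using hTf' i j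
      · intro i j; simpa [matPow] using hTg' i j
    | succ n ih =>
      obtain ⟨ihf, ihg⟩ := ih
      have hBf : (0:ℝ) ≤ (Cg * Ng) ^ n * Nf := mul_nonneg (pow_nonneg hC0 n) hNf0
      have hBg : (0:ℝ) ≤ (Cg * Ng) ^ n * Ng := mul_nonneg (pow_nonneg hC0 n) hNg0
      constructor
      · intro i j
        have h := step_bound f g hfmono hfpos hgmono hgpos hCg (matPow T n) T
          ((Cg * Ng) ^ n * Nf) ((Cg * Ng) ^ n * Ng) Nf Ng hBf hNg0
          ihf ihg hTf' hTg' (le_of_eq (by ring)) i j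
        have e : Cg * ((Cg * Ng) ^ n * Nf * Ng) = (Cg * Ng) ^ (n + 1) * Nf := by
          rw [pow_succ]; ring
        calc f (max i j) * ‖matPow T (n + 1) i j‖
            = f (max i j) * ‖matMul (matPow T n) T i j‖ := rfl
          _ ≤ Cg * ((Cg * Ng) ^ n * Nf * Ng) := h
          _ = (Cg * Ng) ^ (n + 1) * Nf := e
      · intro i j
        have h := step_bound g g hgmono hgpos hgmono hgpos hCg (matPow T n) T
          ((Cg * Ng) ^ n * Ng) ((Cg * Ng) ^ n * Ng) Ng Ng hBg hNg0
          ihg ihg hTg' hTg' le_rfl i j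
        have e : Cg * ((Cg * Ng) ^ n * Ng * Ng) = (Cg * Ng) ^ (n + 1) * Ng := by
          rw [pow_succ]; ring
        calc g (max i j) * ‖matPow T (n + 1) i j‖
            = g (max i j) * ‖matMul (matPow T n) T i j‖ := rfl
          _ ≤ Cg * ((Cg * Ng) ^ n * Ng * Ng) := h
          _ = (Cg * Ng) ^ (n + 1) * Ng := e
  intro n
  apply Real.sSup_le
  · rintro x ⟨⟨i, j⟩, rfl⟩
    exact (key n).1 i j
  · exact mul_nonneg (pow_nonneg hC0 n) hNf0
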